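/- Let α ∈ (1/3, 1), let x, y : [0,2] → ℝ be α-Hölder, let A be an α-Lévy area of order 0 associated with γ = (x, y), and let f : ℝ → ℝ be of class C². Then there exist I ∈ ℝ and C > 0 such that |I_ε^{[0,1]}(f) − I| ≤ C ε^{min(3α−1, α)} for all ε ∈ (0,1]; in particular the corrected symmetric integral ∫_0^1 f(y(u)) d^{A,1}x(u) exists, equals I, and is approximated at this rate. -/

import Mathlib

open MeasureTheory Filter Set

/-- `z` is `α`-Hölder on the interval `[a, b]`. -/
def HolderOnIcc (α a b : ℝ) (z : ℝ → ℝ) : Prop :=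
  ∃ L > 0, ∀ s ∈ Set.Icc a b, ∀ t ∈ Set.Icc a b, |z t - z s| ≤ L * |t - s| ^ α

/-- `A` is an `α`-Lévy area of order 0 associated with `γ = (x, y)` on `[0, 2]`. -/
def IsLevyArea0 (α : ℝ) (x y : ℝ → ℝ) (A : ℝ → ℝ → ℝ) : Prop :=
  (∀ r ∈ Set.Icc (0:ℝ) 2, ∀ s ∈ Set.Icc (0:ℝ) 2, ∀ t ∈ Set.Icc (0:ℝ) 2,
    A r s + A s t + A t r
      = -(1/2) * ((y t - y s) * (x r - x s) - (y r - y s) * (x t - x s)))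
  ∧ ∃ C > 0, ∀ s ∈ Set.Icc (0:ℝ) 2, ∀ t ∈ Set.Icc (0:ℝ) 2,
      |A s t| ≤ C * |t - s| ^ (2 * α)

/-- The `ε`-approximation `I_ε^{[a,b]}(f)` of the corrected symmetric integral. -/
noncomputable def Ieps (x y : ℝ → ℝ) (A : ℝ → ℝ → ℝ) (f : ℝ → ℝ) (a b ε : ℝ) : ℝ :=
  ε⁻¹ * (∫ u in a..b, ((f (y u) + f (y (u + ε))) / 2) * (x (u + ε) - x u))
    + ε⁻¹ * (∫ u in a..b, deriv f (y u) * A u (u + ε))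

/-- Continuity from a two-exponent modulus. -/
lemma continuousOn_of_modulus {g : ℝ → ℝ} {s : Set ℝ} {M a b : ℝ}
    (ha : 0 < a) (hb : 0 < b)
    (h : ∀ u ∈ s, ∀ v ∈ s, |g v - g u| ≤ M * (|v - u| ^ a + |v - u| ^ b)) :
    ContinuousOn g s := by
  intro u hu
  have key : Tendsto (fun v => |g v - g u|) (nhdsWithin u s) (nhds 0) := by
    apply squeeze_zero' (Filter.Eventually.of_forall fun v => abs_nonneg _)
    · filter_upwards [self_mem_nhdsWithin] with v hv
      exact h u hu v hv
    · have h1 : Tendsto (fun v : ℝ => |v - u|) (nhdsWithin u s) (nhds 0) := by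
        have h0 : Tendsto (fun v : ℝ => |v - u|) (nhds u) (nhds 0) := by
          have hc : Continuous (fun v : ℝ => |v - u|) :=
            (continuous_id.sub continuous_const).abs
          have := hc.tendsto u
          simpa using this
        exact h0.mono_left nhdsWithin_le_nhds
      have h2 : ∀ c : ℝ, 0 < c → Tendsto (fun t : ℝ => t ^ c) (nhds 0) (nhds 0) := by
        intro c hc
        have := (Real.continuousAt_rpow_const 0 c (Or.inr hc.le)).tendsto
        simpa [Real.zero_rpow hc.ne'] using this
      have := (((h2 a ha).comp h1).add ((h2 b hb).comp h1)).const_mul M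
      simpa using this
  have : Tendsto (fun v => g v) (nhdsWithin u s) (nhds (g u)) := by
    rw [tendsto_iff_dist_tendsto_zero]
    simpa [Real.dist_eq] using key
  exact this

lemma lip_of_deriv_bound {f : ℝ → ℝ} (hd : Differentiable ℝ f) {R M : ℝ}
    (hM : ∀ z ∈ Icc (-R) R, |deriv f z| ≤ M) :
    ∀ a ∈ Icc (-R) R, ∀ b ∈ Icc (-R) R, |f b - f a| ≤ M * |b - a| := by
  intro a ha b hb
  have := (convex_Icc (-R) R).norm_image_sub_le_of_norm_deriv_le
    (fun x _ => hd.differentiableAt) (fun x hx => by simpa [Real.norm_eq_abs] using hM x hx)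
    ha hb
  simpa [Real.norm_eq_abs] using this

lemma taylor_two {f : ℝ → ℝ} (hd : Differentiable ℝ f) (hd2 : Differentiable ℝ (deriv f))
    {R M : ℝ} (hM : ∀ z ∈ Icc (-R) R, |deriv (deriv f) z| ≤ M) :
    ∀ a ∈ Icc (-R) R, ∀ b ∈ Icc (-R) R,
      |f b - f a - deriv f a * (b - a)| ≤ (M * |b - a|) * |b - a| := by
  intro a ha b hb
  set g : ℝ → ℝ := fun x => f x - deriv f a * x with hg
  have hgd : ∀ x : ℝ, HasDerivAt g (deriv f x - deriv f a) x := by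
    intro x
    have h1 : HasDerivAt f (deriv f x) x := (hd x).hasDerivAt
    have h2 : HasDerivAt (fun x : ℝ => deriv f a * x) (deriv f a) x := by
      simpa using (hasDerivAt_id x).const_mul (deriv f a)
    exact h1.sub h2
  have hsub : uIcc a b ⊆ Icc (-R) R := uIcc_subset_Icc ha hb
  have hlip := lip_of_deriv_bound hd2 hM
  have key := (convex_uIcc a b).norm_image_sub_le_of_norm_deriv_le
    (f := g) (fun x _ => (hgd x).differentiableAt)
    (C := M * |b - a|) (fun x hx => by
      rw [(hgd x).deriv]
      have h1 : |deriv f x - deriv f a| ≤ M * |x - a| := hlip a ha x (hsub hx)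
      have h2 : |x - a| ≤ |b - a| := by
        rcases le_total a b with h | h
        · rw [uIcc_of_le h] at hx
          rw [abs_of_nonneg (by linarith [hx.1] : (0:ℝ) ≤ x - a),
            abs_of_nonneg (by linarith : (0:ℝ) ≤ b - a)]
          linarith [hx.2]
        · rw [uIcc_of_ge h] at hx
          rw [abs_of_nonpos (by linarith [hx.2] : x - a ≤ 0),
            abs_of_nonpos (by linarith : b - a ≤ 0)]
          linarith [hx.1]
      have hMnn : 0 ≤ M := le_trans (abs_nonneg _) (hM a ha)
      calc ‖deriv f x - deriv f a‖ = |deriv f x - deriv f a| := rfl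
        _ ≤ M * |x - a| := h1
        _ ≤ M * |b - a| := by exact mul_le_mul_of_nonneg_left h2 hMnn)
    (left_mem_uIcc ..) (right_mem_uIcc ..)
  have : g b - g a = f b - f a - deriv f a * (b - a) := by simp [hg]; ring
  rw [Real.norm_eq_abs, this, Real.norm_eq_abs] at key
  exact key

set_option maxHeartbeats 10000000 in
theorem stmt_16 (α : ℝ) (hα : α ∈ Set.Ioo (1/3 : ℝ) 1)
    (x y : ℝ → ℝ) (hx : HolderOnIcc α 0 2 x) (hy : HolderOnIcc α 0 2 y)
    (A : ℝ → ℝ → ℝ) (hA : IsLevyArea0 α x y A)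
    (f : ℝ → ℝ) (hf : ContDiff ℝ 2 f) :
    ∃ (I : ℝ) (C : ℝ), 0 < C ∧
      (∀ ε ∈ Set.Ioc (0:ℝ) 1,
        |Ieps x y A f 0 1 ε - I| ≤ C * ε ^ min (3 * α - 1) α) ∧
      Filter.Tendsto (fun ε => Ieps x y A f 0 1 ε)
        (nhdsWithin 0 (Set.Ioi 0)) (nhds I) := by
  obtain ⟨hα13, hα1⟩ := hα
  have hαpos : 0 < α := lt_trans (by norm_num) hα13
  set θ := min (3*α-1) α with hθdef
  have hθpos : 0 < θ := lt_min (by linarith) hαpos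
  have hθa : θ ≤ α := min_le_right _ _
  have hθb : θ ≤ 3*α-1 := min_le_left _ _
  obtain ⟨Lx, hLx, hxH⟩ := hx
  obtain ⟨Ly, hLy, hyH⟩ := hy
  obtain ⟨hAadd, CA, hCA, hAbd⟩ := hA
  -- ordered versions
  have hxH' : ∀ s ∈ Icc (0:ℝ) 2, ∀ t ∈ Icc (0:ℝ) 2, s ≤ t →
      |x t - x s| ≤ Lx * (t-s)^α := by
    intro s hs t ht hst
    have := hxH s hs t ht
    rwa [abs_of_nonneg (by linarith : (0:ℝ) ≤ t - s)] at this
  have hyH' : ∀ s ∈ Icc (0:ℝ) 2, ∀ t ∈ Icc (0:ℝ) 2, s ≤ t →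
      |y t - y s| ≤ Ly * (t-s)^α := by
    intro s hs t ht hst
    have := hyH s hs t ht
    rwa [abs_of_nonneg (by linarith : (0:ℝ) ≤ t - s)] at this
  have hAbd' : ∀ s ∈ Icc (0:ℝ) 2, ∀ t ∈ Icc (0:ℝ) 2, s ≤ t →
      |A s t| ≤ CA * (t-s)^(2*α) := by
    intro s hs t ht hst
    have := hAbd s hs t ht
    rwa [abs_of_nonneg (by linarith : (0:ℝ) ≤ t - s)] at this
  -- continuity of x and y on [0,2]
  have hmod : ∀ (L : ℝ) (z : ℝ → ℝ), 0 < L →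
      (∀ s ∈ Icc (0:ℝ) 2, ∀ t ∈ Icc (0:ℝ) 2, |z t - z s| ≤ L * |t - s| ^ α) →
      ContinuousOn z (Icc (0:ℝ) 2) := by
    intro L z hL hz
    refine continuousOn_of_modulus (M := L) hαpos (by linarith : (0:ℝ) < 2*α) ?_
    intro u hu v hv
    have h0 : 0 ≤ |v-u| ^ (2*α) := Real.rpow_nonneg (abs_nonneg _) _
    have := hz u hu v hv
    nlinarith [this]
  have hxc : ContinuousOn x (Icc (0:ℝ) 2) := hmod Lx x hLx hxH
  have hyc : ContinuousOn y (Icc (0:ℝ) 2) := hmod Ly y hLy hyH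
  -- bound on y
  set R := |y 0| + Ly * (2:ℝ)^α with hRdef
  have h2α0 : (0:ℝ) < (2:ℝ)^α := Real.rpow_pos_of_pos (by norm_num) _
  have hyR : ∀ t ∈ Icc (0:ℝ) 2, y t ∈ Icc (-R) R := by
    intro t ht
    have h1 : |y t - y 0| ≤ Ly * |t - 0| ^ α := hyH 0 (by constructor <;> norm_num) t ht
    have h2 : |t - 0| ^ α ≤ (2:ℝ)^α := by
      apply Real.rpow_le_rpow (abs_nonneg _) _ hαpos.le
      rw [abs_of_nonneg (by linarith [ht.1] : (0:ℝ) ≤ t - 0)]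
      linarith [ht.2]
    have h3 : |y t - y 0| ≤ Ly * (2:ℝ)^α := le_trans h1 (by nlinarith)
    have h4 := abs_sub_abs_le_abs_sub (y t) (y 0)
    constructor
    · have := neg_abs_le (y t); have : -R ≤ -|y t| := by
        simp only [neg_le_neg_iff]
        have := abs_le.mp h3
        rw [hRdef]; cases abs_cases (y t) with
        | inl h => nlinarith [abs_nonneg (y 0), abs_le.mp h3]
        | inr h => nlinarith [abs_nonneg (y 0), abs_le.mp h3]
      linarith [neg_abs_le (y t)]
    · have := abs_le.mp h3
      rw [hRdef]
      have h5 := le_abs_self (y t)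
      have h6 := abs_sub_abs_le_abs_sub (y t) (y 0)
      linarith
  
  -- smoothness data
  have hdf : Differentiable ℝ f := hf.differentiable (by norm_num)
  have hf' : ContDiff ℝ (1+1) f := by norm_num; exact hf
  have hf1 : ContDiff ℝ 1 (deriv f) := (contDiff_succ_iff_deriv.mp hf').2.2
  have hdf2 : Differentiable ℝ (deriv f) := hf1.differentiable (by norm_num)
  have hf1' : ContDiff ℝ (0+1) (deriv f) := by norm_num; exact hf1
  have hf2cont : Continuous (deriv (deriv f)) :=
    contDiff_zero.mp (contDiff_succ_iff_deriv.mp hf1').2.2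
  obtain ⟨M₀, hM₀⟩ := isCompact_Icc.exists_bound_of_continuousOn
    (hf.continuous.continuousOn : ContinuousOn f (Icc (-R) R))
  obtain ⟨M₁, hM₁⟩ := isCompact_Icc.exists_bound_of_continuousOn
    (hf1.continuous.continuousOn : ContinuousOn (deriv f) (Icc (-R) R))
  obtain ⟨M₂, hM₂⟩ := isCompact_Icc.exists_bound_of_continuousOn
    (hf2cont.continuousOn : ContinuousOn (deriv (deriv f)) (Icc (-R) R))
  have h0mem : (0:ℝ) ∈ Icc (0:ℝ) 2 := by constructor <;> norm_num
  have hy0 : y 0 ∈ Icc (-R) R := hyR 0 h0mem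
  have hM₀nn : 0 ≤ M₀ := le_trans (norm_nonneg _) (hM₀ (y 0) hy0)
  have hM₁nn : 0 ≤ M₁ := le_trans (norm_nonneg _) (hM₁ (y 0) hy0)
  have hM₂nn : 0 ≤ M₂ := le_trans (norm_nonneg _) (hM₂ (y 0) hy0)
  have hM₀' : ∀ z ∈ Icc (-R) R, |f z| ≤ M₀ := fun z hz => by
    simpa [Real.norm_eq_abs] using hM₀ z hz
  have hM₁' : ∀ z ∈ Icc (-R) R, |deriv f z| ≤ M₁ := fun z hz => by
    simpa [Real.norm_eq_abs] using hM₁ z hz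
  have hM₂' : ∀ z ∈ Icc (-R) R, |deriv (deriv f) z| ≤ M₂ := fun z hz => by
    simpa [Real.norm_eq_abs] using hM₂ z hz
  have htay := taylor_two hdf hdf2 hM₂'
  have hlipf' := lip_of_deriv_bound hdf2 hM₂'
  -- rpow helpers
  have hsplit2α : ∀ c : ℝ, 0 ≤ c → c^(2*α) = c^α * c^α := by
    intro c hc
    rw [show 2*α = α+α by ring, Real.rpow_add' hc (by intro h; linarith)]
  have hsplit3α : ∀ c : ℝ, 0 ≤ c → c^(3*α) = c^α * c^(2*α) := by
    intro c hc
    rw [show 3*α = α+2*α by ring, Real.rpow_add' hc (by intro h; linarith)]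
  -- the germ
  set Φ : ℝ → ℝ → ℝ := fun s t =>
    ((f (y s) + f (y t))/2) * (x t - x s) + deriv f (y s) * A s t with hΦdef
  set K' : ℝ := M₀ * Lx + M₁ * (CA * (2:ℝ)^α) with hK'def
  have hK'nn : 0 ≤ K' := by
    rw [hK'def]
    have := Real.rpow_nonneg (by norm_num : (0:ℝ) ≤ 2) α
    positivity
  have hPhiB : ∀ s ∈ Icc (0:ℝ) 2, ∀ t ∈ Icc (0:ℝ) 2, s ≤ t →
      |Φ s t| ≤ K' * (t-s)^α := by
    intro s hs t ht hst
    set T := (t-s)^α with hT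
    have hTnn : 0 ≤ T := Real.rpow_nonneg (by linarith) _
    have hT2 : (t-s)^(2*α) = T * T := hsplit2α _ (by linarith)
    have hTle : T ≤ (2:ℝ)^α := by
      rw [hT]
      exact Real.rpow_le_rpow (by linarith) (by linarith [ht.2, hs.1]) hαpos.le
    have hfb1 : |(f (y s) + f (y t))/2| ≤ M₀ := by
      have h1 := abs_le.mp (hM₀' (y s) (hyR s hs))
      have h2 := abs_le.mp (hM₀' (y t) (hyR t ht))
      rw [abs_le]; constructor <;> [linarith [h1.1, h2.1]; linarith [h1.2, h2.2]]
    have hfb2 : |deriv f (y s)| ≤ M₁ := hM₁' (y s) (hyR s hs)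
    have hxb : |x t - x s| ≤ Lx * T := hxH' s hs t ht hst
    have hAb : |A s t| ≤ CA * ((2:ℝ)^α * T) := by
      have h := hAbd' s hs t ht hst
      rw [hT2] at h
      have : T * T ≤ (2:ℝ)^α * T := mul_le_mul_of_nonneg_right hTle hTnn
      nlinarith [hCA]
    calc |Φ s t| ≤ |((f (y s) + f (y t))/2) * (x t - x s)| + |deriv f (y s) * A s t| :=
          abs_add_le _ _
      _ = |(f (y s) + f (y t))/2| * |x t - x s| + |deriv f (y s)| * |A s t| := by
          rw [abs_mul, abs_mul]
      _ ≤ M₀ * (Lx * T) + M₁ * (CA * ((2:ℝ)^α * T)) := by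
          apply add_le_add
          · exact mul_le_mul hfb1 hxb (abs_nonneg _) hM₀nn
          · exact mul_le_mul hfb2 hAb (abs_nonneg _) hM₁nn
      _ = K' * T := by rw [hK'def]; ring
  -- Chen relation
  have hzero : ∀ w ∈ Icc (0:ℝ) 2, A w w = 0 := by
    intro w hw
    have h := hAadd w hw w hw w hw
    ring_nf at h
    linarith
  have hanti : ∀ s ∈ Icc (0:ℝ) 2, ∀ t ∈ Icc (0:ℝ) 2, A t s = -A s t := by
    intro s hs t ht
    have h := hAadd t ht s hs s hs
    have h0 := hzero s hs
    ring_nf at h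
    linarith
  have hchen : ∀ s ∈ Icc (0:ℝ) 2, ∀ u ∈ Icc (0:ℝ) 2, ∀ t ∈ Icc (0:ℝ) 2,
      A s t = A s u + A u t + (1/2)*((y t - y u)*(x s - x u) - (y s - y u)*(x t - x u)) := by
    intro s hs u hu t ht
    have h := hAadd s hs u hu t ht
    have h2 := hanti s hs t ht
    linarith
  set K : ℝ := (3/2) * (Lx * (M₂ * (Ly * Ly))) + M₂ * Ly * CA with hKdef
  have hKnn : 0 ≤ K := by rw [hKdef]; positivity
  have hdPhi : ∀ s ∈ Icc (0:ℝ) 2, ∀ u ∈ Icc (0:ℝ) 2, ∀ t ∈ Icc (0:ℝ) 2,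
      s ≤ u → u ≤ t → |Φ s t - Φ s u - Φ u t| ≤ K * (t-s)^(3*α) := by
    intro s hs u hu t ht hsu hut
    have hys := hyR s hs; have hyu := hyR u hu; have hyt := hyR t ht
    set T := (t-s)^α with hT
    have hTnn : 0 ≤ T := Real.rpow_nonneg (by linarith) _
    have hT2 : (t-s)^(2*α) = T * T := hsplit2α _ (by linarith)
    have hT3 : (t-s)^(3*α) = T * (T * T) := by
      rw [hsplit3α _ (by linarith), hT2]
    have hmono : ∀ p q : ℝ, 0 ≤ p → p ≤ q → p ^ α ≤ q ^ α := fun p q hp hpq =>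
      Real.rpow_le_rpow hp hpq hαpos.le
    have hyut : |y t - y u| ≤ Ly * T :=
      le_trans (hyH' u hu t ht hut)
        (mul_le_mul_of_nonneg_left (hmono (t-u) (t-s) (by linarith) (by linarith)) hLy.le)
    have hysu : |y u - y s| ≤ Ly * T :=
      le_trans (hyH' s hs u hu hsu)
        (mul_le_mul_of_nonneg_left (hmono (u-s) (t-s) (by linarith) (by linarith)) hLy.le)
    have hxsu : |x u - x s| ≤ Lx * T :=
      le_trans (hxH' s hs u hu hsu)
        (mul_le_mul_of_nonneg_left (hmono (u-s) (t-s) (by linarith) (by linarith)) hLx.le)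
    have hxut : |x t - x u| ≤ Lx * T :=
      le_trans (hxH' u hu t ht hut)
        (mul_le_mul_of_nonneg_left (hmono (t-u) (t-s) (by linarith) (by linarith)) hLx.le)
    have hAut : |A u t| ≤ CA * (T * T) := by
      have h := hAbd' u hu t ht hut
      have h3 := hmono (t-u) (t-s) (by linarith) (by linarith)
      have h4 : (0:ℝ) ≤ (t-u)^α := Real.rpow_nonneg (by linarith) _
      have h2 : (t-u)^(2*α) ≤ T * T := by
        rw [hsplit2α _ (by linarith : (0:ℝ) ≤ t-u)]
        exact mul_le_mul h3 h3 h4 hTnn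
      exact le_trans h (mul_le_mul_of_nonneg_left h2 hCA.le)
    have hfsub : |deriv f (y s) - deriv f (y u)| ≤ M₂ * (Ly * T) := by
      have h := hlipf' (y u) hyu (y s) hys
      rw [abs_sub_comm (y s) (y u)] at h
      calc |deriv f (y s) - deriv f (y u)| ≤ M₂ * |y u - y s| := h
        _ ≤ M₂ * (Ly * T) := mul_le_mul_of_nonneg_left hysu hM₂nn
    set P := f (y t) - f (y u) - deriv f (y s) * (y t - y u) with hPdef
    set Q := f (y s) - f (y u) + deriv f (y s) * (y u - y s) with hQdef
    have hPb : |P| ≤ 2 * (M₂ * (Ly * Ly)) * (T * T) := by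
      have h1 : |f (y t) - f (y u) - deriv f (y u) * (y t - y u)|
          ≤ (M₂ * |y t - y u|) * |y t - y u| := htay (y u) hyu (y t) hyt
      have h2 : |(deriv f (y u) - deriv f (y s)) * (y t - y u)|
          ≤ (M₂ * (Ly * T)) * (Ly * T) := by
        rw [abs_mul]
        apply mul_le_mul _ hyut (abs_nonneg _) (by positivity)
        rw [abs_sub_comm]; exact hfsub
      have hPeq : P = (f (y t) - f (y u) - deriv f (y u) * (y t - y u))
          + (deriv f (y u) - deriv f (y s)) * (y t - y u) := by rw [hPdef]; ring
      calc |P| ≤ |f (y t) - f (y u) - deriv f (y u) * (y t - y u)|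
            + |(deriv f (y u) - deriv f (y s)) * (y t - y u)| := by
            rw [hPeq]; exact abs_add_le _ _
        _ ≤ (M₂ * |y t - y u|) * |y t - y u| + (M₂ * (Ly * T)) * (Ly * T) := by
            exact add_le_add h1 h2
        _ ≤ (M₂ * (Ly * T)) * (Ly * T) + (M₂ * (Ly * T)) * (Ly * T) := by
            have := mul_le_mul (mul_le_mul_of_nonneg_left hyut hM₂nn) hyut (abs_nonneg _)
              (by positivity)
            linarith
        _ = 2 * (M₂ * (Ly * Ly)) * (T * T) := by ring
    have hQb : |Q| ≤ (M₂ * (Ly * Ly)) * (T * T) := by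
      have h1 : |f (y u) - f (y s) - deriv f (y s) * (y u - y s)|
          ≤ (M₂ * |y u - y s|) * |y u - y s| := htay (y s) hys (y u) hyu
      have hQeq : Q = -(f (y u) - f (y s) - deriv f (y s) * (y u - y s)) := by
        rw [hQdef]; ring
      rw [hQeq, abs_neg]
      calc |f (y u) - f (y s) - deriv f (y s) * (y u - y s)|
          ≤ (M₂ * |y u - y s|) * |y u - y s| := h1
        _ ≤ (M₂ * (Ly * T)) * (Ly * T) := mul_le_mul
            (mul_le_mul_of_nonneg_left hysu hM₂nn) hysu (abs_nonneg _) (by positivity)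
        _ = (M₂ * (Ly * Ly)) * (T * T) := by ring
    have hid : Φ s t - Φ s u - Φ u t
        = (1/2)*(x u - x s)*P + (1/2)*(x t - x u)*Q
          + (deriv f (y s) - deriv f (y u)) * A u t := by
      simp only [hΦdef]
      rw [hchen s hs u hu t ht, hPdef, hQdef]
      ring
    rw [hid, hT3]
    have e1 : |(1/2)*(x u - x s)*P| ≤ (1/2) * (Lx * T) * (2 * (M₂ * (Ly * Ly)) * (T * T)) := by
      rw [abs_mul, abs_mul, abs_of_nonneg (by norm_num : (0:ℝ) ≤ (1/2:ℝ))]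
      apply mul_le_mul (mul_le_mul_of_nonneg_left hxsu (by norm_num)) hPb (abs_nonneg _)
        (by positivity)
    have e2 : |(1/2)*(x t - x u)*Q| ≤ (1/2) * (Lx * T) * ((M₂ * (Ly * Ly)) * (T * T)) := by
      rw [abs_mul, abs_mul, abs_of_nonneg (by norm_num : (0:ℝ) ≤ (1/2:ℝ))]
      apply mul_le_mul (mul_le_mul_of_nonneg_left hxut (by norm_num)) hQb (abs_nonneg _)
        (by positivity)
    have e3 : |(deriv f (y s) - deriv f (y u)) * A u t| ≤ (M₂ * (Ly * T)) * (CA * (T * T)) := by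
      rw [abs_mul]
      exact mul_le_mul hfsub hAut (abs_nonneg _) (by positivity)
    calc |(1/2)*(x u - x s)*P + (1/2)*(x t - x u)*Q
          + (deriv f (y s) - deriv f (y u)) * A u t|
        ≤ |(1/2)*(x u - x s)*P + (1/2)*(x t - x u)*Q|
          + |(deriv f (y s) - deriv f (y u)) * A u t| := abs_add_le _ _
      _ ≤ |(1/2)*(x u - x s)*P| + |(1/2)*(x t - x u)*Q|
          + |(deriv f (y s) - deriv f (y u)) * A u t| := by
          linarith [abs_add_le ((1/2)*(x u - x s)*P) ((1/2)*(x t - x u)*Q)]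
      _ ≤ (1/2) * (Lx * T) * (2 * (M₂ * (Ly * Ly)) * (T * T))
          + (1/2) * (Lx * T) * ((M₂ * (Ly * Ly)) * (T * T))
          + (M₂ * (Ly * T)) * (CA * (T * T)) := by linarith [e1, e2, e3]
      _ = K * (T * (T * T)) := by rw [hKdef]; ring
  
  -- continuity of u ↦ A u (u+η)
  set M₃ : ℝ := 2*CA + 2*(Lx*Ly*(2:ℝ)^α) with hM₃def
  have hAdiag : ∀ η : ℝ, 0 < η → η ≤ 1 →
      ContinuousOn (fun u => A u (u+η)) (Icc (0:ℝ) (2-η)) := by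
    intro η hη hη1
    have h2e : (0:ℝ) < 2*α := by linarith
    have hmem : ∀ w : ℝ, w ∈ Icc (0:ℝ) (2-η) → w ∈ Icc (0:ℝ) 2 := fun w hw =>
      ⟨hw.1, by linarith [hw.2]⟩
    have hmem' : ∀ w : ℝ, w ∈ Icc (0:ℝ) (2-η) → w + η ∈ Icc (0:ℝ) 2 := fun w hw =>
      ⟨by linarith [hw.1], by linarith [hw.2]⟩
    have hkey : ∀ u ∈ Icc (0:ℝ) (2-η), ∀ v ∈ Icc (0:ℝ) (2-η), u ≤ v →
        |A v (v+η) - A u (u+η)| ≤ M₃ * (|v-u|^(2*α) + |v-u|^α) := by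
      intro u hu v hv huv
      have hu2 := hmem u hu; have hv2 := hmem v hv
      have hu2' := hmem' u hu; have hv2' := hmem' v hv
      have hd0 : 0 ≤ v - u := by linarith
      have habs : |v - u| = v - u := abs_of_nonneg hd0
      have hda : (0:ℝ) ≤ (v-u)^α := Real.rpow_nonneg hd0 _
      have hd2a : (0:ℝ) ≤ (v-u)^(2*α) := Real.rpow_nonneg hd0 _
      rcases le_or_gt v (u+η) with hcase | hcase
      · -- overlapping case
        have c1 := hchen u hu2 v hv2 (u+η) hu2'
        have c2 := hchen v hv2 (u+η) hu2' (v+η) hv2'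
        have hAuv : |A u v| ≤ CA * (v-u)^(2*α) := hAbd' u hu2 v hv2 huv
        have hAee : |A (u+η) (v+η)| ≤ CA * (v-u)^(2*α) := by
          have := hAbd' (u+η) hu2' (v+η) hv2' (by linarith)
          simpa [show v+η-(u+η) = v-u by ring] using this
        have h2pow : ∀ p q : ℝ, p ∈ Icc (0:ℝ) 2 → q ∈ Icc (0:ℝ) 2 → p ≤ q →
            (q-p)^α ≤ (2:ℝ)^α := fun p q hp hq hpq =>
          Real.rpow_le_rpow (by linarith) (by linarith [hq.2, hp.1]) hαpos.le
        -- bound the two correction terms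
        have hyb1 : |y (u+η) - y v| ≤ Ly * (2:ℝ)^α :=
          le_trans (hyH' v hv2 (u+η) hu2' hcase)
            (mul_le_mul_of_nonneg_left (h2pow v (u+η) hv2 hu2' hcase) hLy.le)
        have hxb1 : |x u - x v| ≤ Lx * (v-u)^α := by
          rw [abs_sub_comm]; exact hxH' u hu2 v hv2 huv
        have hyb2 : |y u - y v| ≤ Ly * (v-u)^α := by
          rw [abs_sub_comm]; exact hyH' u hu2 v hv2 huv
        have hxb2 : |x (u+η) - x v| ≤ Lx * (2:ℝ)^α := by
          exact le_trans (hxH' v hv2 (u+η) hu2' hcase)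
            (mul_le_mul_of_nonneg_left (h2pow v (u+η) hv2 hu2' hcase) hLx.le)
        have hyb3 : |y (v+η) - y (u+η)| ≤ Ly * (v-u)^α := by
          have := hyH' (u+η) hu2' (v+η) hv2' (by linarith)
          simpa [show v+η-(u+η) = v-u by ring] using this
        have hxb3 : |x v - x (u+η)| ≤ Lx * (2:ℝ)^α := by
          rw [abs_sub_comm]
          exact le_trans (hxH' v hv2 (u+η) hu2' hcase)
            (mul_le_mul_of_nonneg_left (h2pow v (u+η) hv2 hu2' hcase) hLx.le)
        have hyb4 : |y v - y (u+η)| ≤ Ly * (2:ℝ)^α := by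
          rw [abs_sub_comm]
          exact le_trans (hyH' v hv2 (u+η) hu2' hcase)
            (mul_le_mul_of_nonneg_left (h2pow v (u+η) hv2 hu2' hcase) hLy.le)
        have hxb4 : |x (v+η) - x (u+η)| ≤ Lx * (v-u)^α := by
          have := hxH' (u+η) hu2' (v+η) hv2' (by linarith)
          simpa [show v+η-(u+η) = v-u by ring] using this
        have hiden : A v (v+η) - A u (u+η)
            = (A (u+η) (v+η) - A u v)
              + (1/2)*((y (v+η) - y (u+η))*(x v - x (u+η)) - (y v - y (u+η))*(x (v+η) - x (u+η)))
              - (1/2)*((y (u+η) - y v)*(x u - x v) - (y u - y v)*(x (u+η) - x v)) := by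
          rw [c1, c2]; ring
        have e1 : |A (u+η) (v+η) - A u v| ≤ 2*CA*(v-u)^(2*α) := by
          calc |A (u+η) (v+η) - A u v| ≤ |A (u+η) (v+η)| + |A u v| := abs_sub _ _
            _ ≤ 2*CA*(v-u)^(2*α) := by linarith
        have e2 : |(1/2)*((y (v+η) - y (u+η))*(x v - x (u+η)) - (y v - y (u+η))*(x (v+η) - x (u+η)))|
            ≤ (Lx*Ly*(2:ℝ)^α) * (v-u)^α := by
          have p1 : |(y (v+η) - y (u+η))*(x v - x (u+η))| ≤ (Lx*Ly*(2:ℝ)^α) * (v-u)^α := by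
            rw [abs_mul]
            refine le_trans (mul_le_mul hyb3 hxb3 (abs_nonneg _) (by positivity)) (le_of_eq ?_)
            ring
          have p2 : |(y v - y (u+η))*(x (v+η) - x (u+η))| ≤ (Lx*Ly*(2:ℝ)^α) * (v-u)^α := by
            rw [abs_mul]
            refine le_trans (mul_le_mul hyb4 hxb4 (abs_nonneg _) (by positivity)) (le_of_eq ?_)
            ring
          rw [abs_mul, abs_of_nonneg (by norm_num : (0:ℝ) ≤ (1/2:ℝ))]
          have := abs_sub ((y (v+η) - y (u+η))*(x v - x (u+η)))
            ((y v - y (u+η))*(x (v+η) - x (u+η)))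
          linarith
        have e3 : |(1/2)*((y (u+η) - y v)*(x u - x v) - (y u - y v)*(x (u+η) - x v))|
            ≤ (Lx*Ly*(2:ℝ)^α) * (v-u)^α := by
          have p1 : |(y (u+η) - y v)*(x u - x v)| ≤ (Lx*Ly*(2:ℝ)^α) * (v-u)^α := by
            rw [abs_mul]
            refine le_trans (mul_le_mul hyb1 hxb1 (abs_nonneg _) (by positivity)) (le_of_eq ?_)
            ring
          have p2 : |(y u - y v)*(x (u+η) - x v)| ≤ (Lx*Ly*(2:ℝ)^α) * (v-u)^α := by
            rw [abs_mul]
            refine le_trans (mul_le_mul hyb2 hxb2 (abs_nonneg _) (by positivity)) (le_of_eq ?_)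
            ring
          rw [abs_mul, abs_of_nonneg (by norm_num : (0:ℝ) ≤ (1/2:ℝ))]
          have := abs_sub ((y (u+η) - y v)*(x u - x v)) ((y u - y v)*(x (u+η) - x v))
          linarith
        rw [hiden, habs]
        have htotal := abs_add_le ((A (u+η) (v+η) - A u v)
          + (1/2)*((y (v+η) - y (u+η))*(x v - x (u+η)) - (y v - y (u+η))*(x (v+η) - x (u+η))))
          (-((1/2)*((y (u+η) - y v)*(x u - x v) - (y u - y v)*(x (u+η) - x v))))
        rw [abs_neg] at htotal
        have htot2 := abs_add_le (A (u+η) (v+η) - A u v)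
          ((1/2)*((y (v+η) - y (u+η))*(x v - x (u+η)) - (y v - y (u+η))*(x (v+η) - x (u+η))))
        have h2anonneg : (0:ℝ) ≤ (Lx*Ly*(2:ℝ)^α) := by positivity
        calc |A (u+η) (v+η) - A u v
              + (1/2)*((y (v+η) - y (u+η))*(x v - x (u+η)) - (y v - y (u+η))*(x (v+η) - x (u+η)))
              - (1/2)*((y (u+η) - y v)*(x u - x v) - (y u - y v)*(x (u+η) - x v))|
            ≤ 2*CA*(v-u)^(2*α) + 2*((Lx*Ly*(2:ℝ)^α) * (v-u)^α) := by
              rw [sub_eq_add_neg]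
              linarith
          _ ≤ M₃ * ((v-u)^(2*α) + (v-u)^α) := by
              rw [hM₃def]
              have h2anonneg' : (0:ℝ) ≤ Lx*Ly*(2:ℝ)^α := by positivity
              nlinarith [hCA.le, hd2a, hda]
      · -- disjoint case
        have h1 : |A u (u+η)| ≤ CA * η^(2*α) := by
          have := hAbd' u hu2 (u+η) hu2' (by linarith)
          simpa [show u+η-u = η by ring] using this
        have h2 : |A v (v+η)| ≤ CA * η^(2*α) := by
          have := hAbd' v hv2 (v+η) hv2' (by linarith)
          simpa [show v+η-v = η by ring] using this
        have h3 : η^(2*α) ≤ (v-u)^(2*α) :=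
          Real.rpow_le_rpow hη.le (by linarith) h2e.le
        rw [habs]
        calc |A v (v+η) - A u (u+η)| ≤ |A v (v+η)| + |A u (u+η)| := abs_sub _ _
          _ ≤ 2*CA*(v-u)^(2*α) := by nlinarith [hCA.le]
          _ ≤ M₃ * ((v-u)^(2*α) + (v-u)^α) := by
              rw [hM₃def]
              have hnn : (0:ℝ) ≤ (v-u)^α := Real.rpow_nonneg hd0 _
              have hnn2 : (0:ℝ) ≤ (v-u)^(2*α) := Real.rpow_nonneg hd0 _
              have h2anonneg : (0:ℝ) ≤ (Lx*Ly*(2:ℝ)^α) := by positivity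
              nlinarith [hCA.le]
    refine continuousOn_of_modulus (M := M₃) h2e hαpos ?_
    intro u hu v hv
    rcases le_total u v with h | h
    · exact hkey u hu v hv h
    · rw [abs_sub_comm, abs_sub_comm v u]
      exact hkey v hv u hu h
  
  -- continuity of the germ along the diagonal, and integrability
  have hG1 : ∀ η : ℝ, 0 < η → η ≤ 1 →
      ContinuousOn (fun u => ((f (y u) + f (y (u+η)))/2) * (x (u+η) - x u))
        (Icc (0:ℝ) (2-η)) := by
    intro η hη hη1
    have hsub1 : Icc (0:ℝ) (2-η) ⊆ Icc (0:ℝ) 2 := Icc_subset_Icc le_rfl (by linarith)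
    have hshift : ContinuousOn (fun u : ℝ => u + η) (Icc (0:ℝ) (2-η)) :=
      (continuous_id.add continuous_const).continuousOn
    have hmaps : MapsTo (fun u : ℝ => u + η) (Icc (0:ℝ) (2-η)) (Icc (0:ℝ) 2) := by
      intro u hu
      simp only [mem_Icc] at hu ⊢
      constructor <;> linarith [hu.1, hu.2]
    have hyc1 : ContinuousOn (fun u => y u) (Icc (0:ℝ) (2-η)) := hyc.mono hsub1
    have hyc2 : ContinuousOn (fun u => y (u+η)) (Icc (0:ℝ) (2-η)) := hyc.comp hshift hmaps
    have hxc1 : ContinuousOn (fun u => x u) (Icc (0:ℝ) (2-η)) := hxc.mono hsub1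
    have hxc2 : ContinuousOn (fun u => x (u+η)) (Icc (0:ℝ) (2-η)) := hxc.comp hshift hmaps
    exact (((hf.continuous.comp_continuousOn hyc1).add
      (hf.continuous.comp_continuousOn hyc2)).div_const 2).mul (hxc2.sub hxc1)
  have hG2 : ∀ η : ℝ, 0 < η → η ≤ 1 →
      ContinuousOn (fun u => deriv f (y u) * A u (u+η)) (Icc (0:ℝ) (2-η)) := by
    intro η hη hη1
    have hsub1 : Icc (0:ℝ) (2-η) ⊆ Icc (0:ℝ) 2 := Icc_subset_Icc le_rfl (by linarith)
    have hyc1 : ContinuousOn (fun u => y u) (Icc (0:ℝ) (2-η)) := hyc.mono hsub1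
    exact (hf1.continuous.comp_continuousOn hyc1).mul (hAdiag η hη hη1)
  have hGcont : ∀ η : ℝ, 0 < η → η ≤ 1 →
      ContinuousOn (fun u => Φ u (u+η)) (Icc (0:ℝ) (2-η)) := by
    intro η hη hη1
    simp only [hΦdef]
    exact (hG1 η hη hη1).add (hG2 η hη hη1)
  have hint : ∀ η : ℝ, 0 < η → η ≤ 1 → ∀ a b : ℝ, a ∈ Icc (0:ℝ) (2-η) →
      b ∈ Icc (0:ℝ) (2-η) → IntervalIntegrable (fun u => Φ u (u+η)) volume a b :=
    fun η hη hη1 a b ha hb =>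
      ((hGcont η hη hη1).mono (uIcc_subset_Icc ha hb)).intervalIntegrable
  set J : ℝ → ℝ := fun η => ∫ u in (0:ℝ)..1, Φ u (u+η) with hJdef
  set g : ℝ → ℝ := fun η => η⁻¹ * J η with hgdef
  have hIeps : ∀ η : ℝ, 0 < η → η ≤ 1 → Ieps x y A f 0 1 η = g η := by
    intro η hη hη1
    have hmem1 : (0:ℝ) ∈ Icc (0:ℝ) (2-η) := ⟨le_rfl, by linarith⟩
    have hmem2 : (1:ℝ) ∈ Icc (0:ℝ) (2-η) := ⟨by norm_num, by linarith⟩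
    have i1 : IntervalIntegrable
        (fun u => ((f (y u) + f (y (u+η)))/2) * (x (u+η) - x u)) volume 0 1 :=
      ((hG1 η hη hη1).mono (uIcc_subset_Icc hmem1 hmem2)).intervalIntegrable
    have i2 : IntervalIntegrable (fun u => deriv f (y u) * A u (u+η)) volume 0 1 :=
      ((hG2 η hη hη1).mono (uIcc_subset_Icc hmem1 hmem2)).intervalIntegrable
    have hJη : J η = (∫ u in (0:ℝ)..1, ((f (y u) + f (y (u+η)))/2) * (x (u+η) - x u))
        + ∫ u in (0:ℝ)..1, deriv f (y u) * A u (u+η) := by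
      rw [hJdef, ← intervalIntegral.integral_add i1 i2]
    rw [hgdef]
    simp only []
    rw [hJη]
    unfold Ieps
    ring
  -- the splitting inequality
  have hJsplit : ∀ δ η₂ : ℝ, 0 < δ → 0 < η₂ → δ + η₂ ≤ 1 →
      |J (δ+η₂) - J δ - J η₂| ≤ K*(δ+η₂)^(3*α) + 2*(δ*(K'*η₂^α)) := by
    intro δ η₂ hδ hη₂ hsum
    have ibig : IntervalIntegrable (fun u => Φ u (u+(δ+η₂))) volume 0 1 :=
      hint (δ+η₂) (by linarith) (by linarith) 0 1 ⟨le_rfl, by linarith⟩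
        ⟨by norm_num, by linarith⟩
    have iδ : IntervalIntegrable (fun u => Φ u (u+δ)) volume 0 1 :=
      hint δ hδ (by linarith) 0 1 ⟨le_rfl, by linarith⟩ ⟨by norm_num, by linarith⟩
    have imid0 : IntervalIntegrable (fun v => Φ v (v+η₂)) volume δ (1+δ) :=
      hint η₂ hη₂ (by linarith) δ (1+δ) ⟨hδ.le, by linarith⟩ ⟨by linarith, by linarith⟩
    have imid : IntervalIntegrable (fun u => Φ (u+δ) (u+δ+η₂)) volume 0 1 := by
      have h := imid0.comp_add_right δ
      simpa [show δ - δ = (0:ℝ) by ring, show 1+δ-δ = (1:ℝ) by ring] using h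
    have hDbd : ∀ u ∈ Set.uIoc (0:ℝ) 1,
        ‖Φ u (u+(δ+η₂)) - Φ u (u+δ) - Φ (u+δ) (u+δ+η₂)‖ ≤ K*(δ+η₂)^(3*α) := by
      intro u hu
      rw [uIoc_of_le (by norm_num : (0:ℝ) ≤ 1)] at hu
      have hu0 : 0 < u := hu.1
      have hu1 : u ≤ 1 := hu.2
      have h := hdPhi u ⟨hu0.le, by linarith⟩ (u+δ) ⟨by linarith, by linarith⟩
        (u+(δ+η₂)) ⟨by linarith, by linarith⟩ (by linarith) (by linarith)
      rw [show u+(δ+η₂)-u = δ+η₂ by ring] at h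
      rw [Real.norm_eq_abs, show u+(δ+η₂) = u+δ+η₂ by ring] at *
      convert h using 3 <;> ring
    have hdiff : J (δ+η₂) - J δ - (∫ u in (0:ℝ)..1, Φ (u+δ) (u+δ+η₂))
        = ∫ u in (0:ℝ)..1,
            (Φ u (u+(δ+η₂)) - Φ u (u+δ) - Φ (u+δ) (u+δ+η₂)) := by
      rw [hJdef]
      simp only []
      rw [intervalIntegral.integral_sub (ibig.sub iδ) imid,
        intervalIntegral.integral_sub ibig iδ]
    have hb1 : |J (δ+η₂) - J δ - (∫ u in (0:ℝ)..1, Φ (u+δ) (u+δ+η₂))|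
        ≤ K*(δ+η₂)^(3*α) := by
      rw [hdiff]
      have := intervalIntegral.norm_integral_le_of_norm_le_const hDbd
      simpa using this
    have hmid : (∫ u in (0:ℝ)..1, Φ (u+δ) (u+δ+η₂)) = ∫ v in δ..(1+δ), Φ v (v+η₂) := by
      have h := intervalIntegral.integral_comp_add_right (a := (0:ℝ)) (b := 1) (fun v => Φ v (v+η₂)) δ
      simpa [zero_add, add_comm] using h
    have iη01 : IntervalIntegrable (fun v => Φ v (v+η₂)) volume 0 δ :=
      hint η₂ hη₂ (by linarith) 0 δ ⟨le_rfl, by linarith⟩ ⟨hδ.le, by linarith⟩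
    have iηδ1 : IntervalIntegrable (fun v => Φ v (v+η₂)) volume δ 1 :=
      hint η₂ hη₂ (by linarith) δ 1 ⟨hδ.le, by linarith⟩ ⟨by norm_num, by linarith⟩
    have iη1δ : IntervalIntegrable (fun v => Φ v (v+η₂)) volume 1 (1+δ) :=
      hint η₂ hη₂ (by linarith) 1 (1+δ) ⟨by norm_num, by linarith⟩ ⟨by linarith, by linarith⟩
    have hadd1 : (∫ v in δ..(1:ℝ), Φ v (v+η₂)) + (∫ v in (1:ℝ)..(1+δ), Φ v (v+η₂))
        = ∫ v in δ..(1+δ), Φ v (v+η₂) :=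
      intervalIntegral.integral_add_adjacent_intervals iηδ1 iη1δ
    have hadd2 : (∫ v in (0:ℝ)..δ, Φ v (v+η₂)) + (∫ v in δ..(1:ℝ), Φ v (v+η₂))
        = ∫ v in (0:ℝ)..1, Φ v (v+η₂) :=
      intervalIntegral.integral_add_adjacent_intervals iη01 iηδ1
    have hJη₂ : J η₂ = ∫ v in (0:ℝ)..1, Φ v (v+η₂) := by rw [hJdef]
    have hΦsmall : ∀ lo hi : ℝ, 0 ≤ lo → lo ≤ hi → hi + η₂ ≤ 2 →
        |∫ v in lo..hi, Φ v (v+η₂)| ≤ (K'*η₂^α) * (hi - lo) := by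
      intro lo hi hlo hlohi hhi
      have hbd : ∀ v ∈ Set.uIoc lo hi, ‖Φ v (v+η₂)‖ ≤ K'*η₂^α := by
        intro v hv
        rw [uIoc_of_le hlohi] at hv
        have h := hPhiB v ⟨by linarith [hv.1], by linarith [hv.2]⟩
          (v+η₂) ⟨by linarith [hv.1], by linarith [hv.2]⟩ (by linarith)
        rw [show v+η₂-v = η₂ by ring] at h
        exact h
      have := intervalIntegral.norm_integral_le_of_norm_le_const hbd
      rw [Real.norm_eq_abs, abs_of_nonneg (by linarith : (0:ℝ) ≤ hi - lo)] at this
      exact this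
    have hb2 : |∫ v in (1:ℝ)..(1+δ), Φ v (v+η₂)| ≤ (K'*η₂^α) * δ := by
      have := hΦsmall 1 (1+δ) (by norm_num) (by linarith) (by linarith)
      simpa using this
    have hb3 : |∫ v in (0:ℝ)..δ, Φ v (v+η₂)| ≤ (K'*η₂^α) * δ := by
      have := hΦsmall 0 δ le_rfl hδ.le (by linarith)
      simpa using this
    have hfinal : J (δ+η₂) - J δ - J η₂
        = (J (δ+η₂) - J δ - (∫ u in (0:ℝ)..1, Φ (u+δ) (u+δ+η₂)))
          + (∫ v in (1:ℝ)..(1+δ), Φ v (v+η₂)) - (∫ v in (0:ℝ)..δ, Φ v (v+η₂)) := by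
      rw [hmid, hJη₂]
      linarith [hadd1, hadd2]
    rw [hfinal]
    have := abs_add_le (J (δ+η₂) - J δ - (∫ u in (0:ℝ)..1, Φ (u+δ) (u+δ+η₂)))
      (∫ v in (1:ℝ)..(1+δ), Φ v (v+η₂))
    have h2 := abs_sub ((J (δ+η₂) - J δ - (∫ u in (0:ℝ)..1, Φ (u+δ) (u+δ+η₂)))
      + (∫ v in (1:ℝ)..(1+δ), Φ v (v+η₂))) (∫ v in (0:ℝ)..δ, Φ v (v+η₂))
    calc |J (δ+η₂) - J δ - (∫ u in (0:ℝ)..1, Φ (u+δ) (u+δ+η₂))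
          + (∫ v in (1:ℝ)..(1+δ), Φ v (v+η₂)) - (∫ v in (0:ℝ)..δ, Φ v (v+η₂))|
        ≤ K*(δ+η₂)^(3*α) + (K'*η₂^α) * δ + (K'*η₂^α) * δ := by linarith
      _ = K*(δ+η₂)^(3*α) + 2*(δ*(K'*η₂^α)) := by ring
  
  -- comparison of scales for g
  set c : ℝ := K + 2*K' with hcdef
  have hcnn : 0 ≤ c := by rw [hcdef]; linarith
  have hrel : ∀ δ η₂ : ℝ, 0 < δ → 0 < η₂ → δ + η₂ ≤ 1 →
      |g (δ+η₂) - (δ/(δ+η₂)) * g δ - (η₂/(δ+η₂)) * g η₂| ≤ c * (δ+η₂)^θ := by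
    intro δ η₂ hδ hη₂ hsum
    have hε : 0 < δ+η₂ := by linarith
    have heq : g (δ+η₂) - (δ/(δ+η₂)) * g δ - (η₂/(δ+η₂)) * g η₂
        = (δ+η₂)⁻¹ * (J (δ+η₂) - J δ - J η₂) := by
      rw [hgdef]
      simp only []
      field_simp
    rw [heq, abs_mul, abs_of_nonneg (inv_nonneg.mpr hε.le)]
    have h1 := hJsplit δ η₂ hδ hη₂ hsum
    have h2 : (δ+η₂)⁻¹ * |J (δ+η₂) - J δ - J η₂|
        ≤ (δ+η₂)⁻¹ * (K*(δ+η₂)^(3*α) + 2*(δ*(K'*η₂^α))) :=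
      mul_le_mul_of_nonneg_left h1 (inv_nonneg.mpr hε.le)
    refine le_trans h2 ?_
    have e1 : (δ+η₂)^(3*α) = (δ+η₂)^(3*α-1) * (δ+η₂) := by
      have he1 : (δ+η₂)^(3*α-1) * (δ+η₂)^(1:ℝ) = (δ+η₂)^(3*α) := by
        rw [← Real.rpow_add hε]
        ring_nf
      rw [← he1, Real.rpow_one]
    have e2 : (δ+η₂)^(3*α-1) ≤ (δ+η₂)^θ :=
      Real.rpow_le_rpow_of_exponent_ge hε (by linarith) hθb
    have e3 : η₂^α ≤ (δ+η₂)^α := Real.rpow_le_rpow hη₂.le (by linarith) hαpos.le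
    have e4 : (δ+η₂)^α ≤ (δ+η₂)^θ := Real.rpow_le_rpow_of_exponent_ge hε (by linarith) hθa
    have hθnn : 0 ≤ (δ+η₂)^θ := Real.rpow_nonneg hε.le _
    have q1 : K*(δ+η₂)^(3*α) ≤ K*((δ+η₂)^θ * (δ+η₂)) := by
      rw [e1]
      exact mul_le_mul_of_nonneg_left (mul_le_mul_of_nonneg_right e2 hε.le) hKnn
    have q2 : δ*(K'*η₂^α) ≤ (δ+η₂)*(K'*(δ+η₂)^θ) := by
      have h5 : η₂^α ≤ (δ+η₂)^θ := le_trans e3 e4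
      have h6 : K'*η₂^α ≤ K'*(δ+η₂)^θ := mul_le_mul_of_nonneg_left h5 hK'nn
      exact mul_le_mul (by linarith) h6
        (mul_nonneg hK'nn (Real.rpow_nonneg hη₂.le _)) hε.le
    calc (δ+η₂)⁻¹ * (K*(δ+η₂)^(3*α) + 2*(δ*(K'*η₂^α)))
        ≤ (δ+η₂)⁻¹ * (K*((δ+η₂)^θ * (δ+η₂)) + 2*((δ+η₂)*(K'*(δ+η₂)^θ))) := by
          apply mul_le_mul_of_nonneg_left _ (inv_nonneg.mpr hε.le)
          linarith
      _ = c * (δ+η₂)^θ := by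
          rw [hcdef]
          field_simp
  -- dyadic sequence
  set q : ℝ := (1/2:ℝ)^θ with hqdef
  have hq0 : 0 < q := Real.rpow_pos_of_pos (by norm_num) _
  have hq1 : q < 1 := Real.rpow_lt_one (by norm_num) (by norm_num) hθpos
  have hpowθ : ∀ n : ℕ, ((1/2:ℝ)^n : ℝ)^θ = q^n := by
    intro n
    rw [← Real.rpow_natCast ((1/2:ℝ)) n, ← Real.rpow_natCast q n, hqdef,
      ← Real.rpow_mul (by norm_num : (0:ℝ) ≤ 1/2), ← Real.rpow_mul (by norm_num : (0:ℝ) ≤ 1/2)]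
    ring_nf
  have hepos : ∀ n : ℕ, (0:ℝ) < (1/2:ℝ)^n := fun n => by positivity
  have hele1 : ∀ n : ℕ, ((1/2:ℝ))^n ≤ 1 := fun n =>
    pow_le_one₀ (by norm_num) (by norm_num)
  have hdya : ∀ n : ℕ, dist (g ((1/2:ℝ)^n)) (g ((1/2:ℝ)^(n+1))) ≤ c * q^n := by
    intro n
    have hsum2 : ((1/2:ℝ))^(n+1) + (1/2:ℝ)^(n+1) = (1/2:ℝ)^n := by ring
    have h := hrel ((1/2:ℝ)^(n+1)) ((1/2:ℝ)^(n+1)) (hepos _) (hepos _)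
      (by rw [hsum2]; exact hele1 n)
    rw [hsum2] at h
    have hcoef : ((1/2:ℝ)^(n+1)) / ((1/2:ℝ)^n) = 1/2 := by
      rw [pow_succ]
      field_simp
    rw [hcoef] at h
    have hgg : g ((1/2:ℝ)^n) - 1/2 * g ((1/2:ℝ)^(n+1)) - 1/2 * g ((1/2:ℝ)^(n+1))
        = g ((1/2:ℝ)^n) - g ((1/2:ℝ)^(n+1)) := by ring
    rw [hgg] at h
    rw [Real.dist_eq]
    calc |g ((1/2:ℝ)^n) - g ((1/2:ℝ)^(n+1))| ≤ c * ((1/2:ℝ)^n)^θ := h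
      _ = c * q^n := by rw [hpowθ]
  have hcauchy : CauchySeq (fun n => g ((1/2:ℝ)^n)) :=
    cauchySeq_of_le_geometric q c hq1 hdya
  obtain ⟨I, hI⟩ := cauchySeq_tendsto_of_complete hcauchy
  set C₁ : ℝ := c/(1-q) with hC₁def
  have hC₁nn : 0 ≤ C₁ := div_nonneg hcnn (by linarith)
  have hIdya : ∀ n : ℕ, |g ((1/2:ℝ)^n) - I| ≤ C₁ * ((1/2:ℝ)^n)^θ := by
    intro n
    have h := dist_le_of_le_geometric_of_tendsto q c hq1 hdya hI n
    rw [Real.dist_eq] at h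
    calc |g ((1/2:ℝ)^n) - I| ≤ c * q^n / (1-q) := h
      _ = C₁ * ((1/2:ℝ)^n)^θ := by rw [hC₁def, hpowθ]; ring
  -- bracketing
  have hbrk : ∀ η : ℝ, 0 < η → η ≤ 1 → ∃ n : ℕ, (1/2:ℝ)^(n+1) < η ∧ η ≤ (1/2:ℝ)^n := by
    intro η hη hη1
    obtain ⟨m, hm⟩ := exists_pow_lt_of_lt_one hη (by norm_num : (1/2:ℝ) < 1)
    have hex : ∃ k : ℕ, (1/2:ℝ)^(k+1) < η :=
      ⟨m, lt_of_le_of_lt (pow_le_pow_of_le_one (by norm_num) (by norm_num) (by omega)) hm⟩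
    classical
    refine ⟨Nat.find hex, Nat.find_spec hex, ?_⟩
    rcases Nat.eq_zero_or_pos (Nat.find hex) with h0 | h0
    · rw [h0]; simpa using hη1
    · obtain ⟨k, hk⟩ := Nat.exists_eq_succ_of_ne_zero h0.ne'
      have hmin := Nat.find_min hex (m := k) (by omega)
      push_neg at hmin
      rw [hk]
      simpa using hmin
  -- a priori bound for g on (1/2, 1]
  have hgsmall : ∀ η : ℝ, 1/2 < η → η ≤ 1 → |g η| ≤ 2*K' := by
    intro η hη hη1
    have hη0 : (0:ℝ) < η := by linarith
    have hJb : |J η| ≤ K' * η^α := by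
      rw [hJdef]
      simp only []
      have hbd : ∀ v ∈ Set.uIoc (0:ℝ) 1, ‖Φ v (v+η)‖ ≤ K'*η^α := by
        intro v hv
        rw [uIoc_of_le (by norm_num : (0:ℝ) ≤ 1)] at hv
        have h := hPhiB v ⟨by linarith [hv.1], by linarith [hv.2]⟩
          (v+η) ⟨by linarith [hv.1], by linarith [hv.2]⟩ (by linarith)
        rw [show v+η-v = η by ring] at h
        exact h
      have := intervalIntegral.norm_integral_le_of_norm_le_const hbd
      simpa using this
    rw [hgdef]
    simp only []
    rw [abs_mul, abs_of_nonneg (inv_nonneg.mpr hη0.le)]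
    have h1 : η⁻¹ ≤ 2 := by
      rw [show (2:ℝ) = (1/2:ℝ)⁻¹ by norm_num]
      exact inv_anti₀ (by norm_num) hη.le
    have h2 : η^α ≤ 1 := Real.rpow_le_one hη0.le hη1 hαpos.le
    have h3 : K'*η^α ≤ K' := by nlinarith [Real.rpow_nonneg hη0.le α]
    exact mul_le_mul h1 (le_trans hJb h3) (abs_nonneg _) (by norm_num)
  have hgeom : ∀ n : ℕ, (∑ i ∈ Finset.range n, q^i) ≤ 1/(1-q) := by
    intro n
    rw [geom_sum_eq (ne_of_lt hq1)]
    have hne : q - 1 ≠ 0 := by intro h; linarith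
    have h1ne : (1:ℝ) - q ≠ 0 := by intro h; linarith
    have e : (q^n - 1)/(q - 1) = (1 - q^n)/(1 - q) := by
      rw [div_eq_div_iff hne h1ne]
      ring
    rw [e, div_le_div_iff₀ (by linarith) (by linarith)]
    have := pow_nonneg hq0.le n
    nlinarith
  set B : ℝ := 2*K' + c*(1/(1-q)) with hBdef
  have hBge : ∀ n : ℕ, ∀ η : ℝ, 0 < η → (1/2:ℝ)^(n+1) < η → η ≤ (1/2:ℝ)^n →
      |g η| ≤ 2*K' + c*(∑ i ∈ Finset.range n, q^i) := by
    intro n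
    induction n with
    | zero =>
      intro η hη hlow hhigh
      have := hgsmall η (by simpa using hlow) (by simpa using hhigh)
      simpa using this
    | succ k ih =>
      intro η hη hlow hhigh
      have h2η : 0 < 2*η := by linarith
      have hlow2 : (1/2:ℝ)^(k+1) < 2*η := by
        have e : (1/2:ℝ)^(k+1) = 2*(1/2:ℝ)^(k+1+1) := by ring
        rw [e]; linarith
      have hhigh2 : 2*η ≤ (1/2:ℝ)^k := by
        have e : (1/2:ℝ)^k = 2*(1/2:ℝ)^(k+1) := by ring
        rw [e]; linarith
      have hb2 := ih (2*η) h2η hlow2 hhigh2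
      have hsumeq : η + η = 2*η := by ring
      have hrel2 := hrel η η hη hη (by rw [hsumeq]; linarith [hele1 k])
      rw [hsumeq] at hrel2
      have hcoef : η/(2*η) = 1/2 := by
        rw [div_eq_iff (by positivity : (2*η:ℝ) ≠ 0)]
        ring
      rw [hcoef] at hrel2
      have hgg : g (2*η) - 1/2*g η - 1/2*g η = g (2*η) - g η := by ring
      rw [hgg] at hrel2
      have hθbd : (2*η)^θ ≤ q^k := by
        calc (2*η)^θ ≤ ((1/2:ℝ)^k)^θ :=
              Real.rpow_le_rpow (by linarith) hhigh2 hθpos.le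
          _ = q^k := hpowθ k
      have habs : |g η| ≤ |g (2*η)| + c*(2*η)^θ := by
        calc |g η| = |g (2*η) - (g (2*η) - g η)| := by ring_nf
          _ ≤ |g (2*η)| + |g (2*η) - g η| := abs_sub _ _
          _ ≤ |g (2*η)| + c*(2*η)^θ := by linarith [hrel2]
      have hcq : c*(2*η)^θ ≤ c*q^k := mul_le_mul_of_nonneg_left hθbd hcnn
      calc |g η| ≤ (2*K' + c*(∑ i ∈ Finset.range k, q^i)) + c*q^k := by linarith
        _ = 2*K' + c*(∑ i ∈ Finset.range (k+1), q^i) := by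
            rw [Finset.sum_range_succ]; ring
  have hgB : ∀ η : ℝ, 0 < η → η ≤ 1 → |g η| ≤ B := by
    intro η hη hη1
    obtain ⟨n, hlow, hhigh⟩ := hbrk η hη hη1
    have h1 := hBge n η hη hlow hhigh
    have h2 := hgeom n
    have h3 : c*(∑ i ∈ Finset.range n, q^i) ≤ c*(1/(1-q)) :=
      mul_le_mul_of_nonneg_left h2 hcnn
    rw [hBdef]
    exact h1.trans (add_le_add_right h3 _)
  -- main induction
  set C₃ : ℝ := 2*(c + C₁) with hC₃def
  have hC₃nn : 0 ≤ C₃ := by rw [hC₃def]; linarith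
  set H : ℝ := B + |I| with hHdef
  have hmain : ∀ N : ℕ, ∀ η : ℝ, 0 < η → η ≤ 1 →
      |g η - I| ≤ C₃*η^θ + (1/2:ℝ)^N * H := by
    intro N
    induction N with
    | zero =>
      intro η hη hη1
      have h1 := hgB η hη hη1
      have h2 : |g η - I| ≤ |g η| + |I| := abs_sub _ _
      have h3 : 0 ≤ C₃*η^θ := mul_nonneg hC₃nn (Real.rpow_nonneg hη.le _)
      rw [hHdef]
      simp only [pow_zero, one_mul]
      linarith
    | succ N ih =>
      intro η hη hη1
      obtain ⟨n, hlow, hhigh⟩ := hbrk η hη hη1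
      set d : ℝ := (1/2:ℝ)^(n+1) with hddef
      have hd0 : 0 < d := hepos _
      set r : ℝ := η - d with hrdef
      have hr0 : 0 < r := by rw [hrdef]; linarith
      have hrd : r ≤ d := by
        rw [hrdef, hddef]
        have e : (1/2:ℝ)^n = 2*(1/2:ℝ)^(n+1) := by ring
        rw [e] at hhigh
        linarith
      have hrε : r + d = η := by rw [hrdef]; ring
      have hrel3 := hrel r d hr0 hd0 (by rw [hrε]; exact hη1)
      rw [hrε] at hrel3
      have hgr := ih r hr0 (by linarith)
      have hgd : |g d - I| ≤ C₁ * d^θ := hIdya (n+1)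
      have hcoefs : r/η + d/η = 1 := by
        rw [← add_div, hrε, div_self (ne_of_gt hη)]
      have hsplitI : g η - I = (g η - (r/η)*g r - (d/η)*g d)
          + (r/η)*(g r - I) + (d/η)*(g d - I) := by
        have hh : g η - I = (g η - (r/η)*g r - (d/η)*g d)
            + (r/η)*(g r - I) + (d/η)*(g d - I) + ((r/η + d/η) - 1)*I := by ring
        rw [hcoefs] at hh
        simpa using hh
      have hrη : 0 ≤ r/η := by positivity
      have hdη : 0 ≤ d/η := by positivity
      have habs : |g η - I| ≤ c*η^θ + (r/η)*|g r - I| + (d/η)*|g d - I| := by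
        rw [hsplitI]
        have t1 := abs_add_le ((g η - (r/η)*g r - (d/η)*g d) + (r/η)*(g r - I))
          ((d/η)*(g d - I))
        have t2 := abs_add_le (g η - (r/η)*g r - (d/η)*g d) ((r/η)*(g r - I))
        rw [abs_mul ((d/η)) (g d - I), abs_of_nonneg hdη] at t1
        rw [abs_mul ((r/η)) (g r - I), abs_of_nonneg hrη] at t2
        linarith [hrel3]
      have hb_r : (r/η)*|g r - I| ≤ (1/2)*(C₃*η^θ) + (1/2:ℝ)^(N+1)*H := by
        have h1 : r/η ≤ 1/2 := by
          rw [div_le_iff₀ hη]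
          linarith
        have h3 : r^θ ≤ η^θ := Real.rpow_le_rpow hr0.le (by linarith) hθpos.le
        have h4 : C₃*r^θ ≤ C₃*η^θ := mul_le_mul_of_nonneg_left h3 hC₃nn
        calc (r/η)*|g r - I| ≤ (1/2)*(C₃*η^θ + (1/2:ℝ)^N*H) :=
              mul_le_mul h1 (le_trans hgr (by linarith)) (abs_nonneg _) (by norm_num)
          _ = (1/2)*(C₃*η^θ) + (1/2:ℝ)^(N+1)*H := by ring
      have hb_d : (d/η)*|g d - I| ≤ C₁*η^θ := by
        have h1 : d/η ≤ 1 := by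
          rw [div_le_one hη]
          linarith
        have h3 : d^θ ≤ η^θ := Real.rpow_le_rpow hd0.le (by linarith) hθpos.le
        have h4 : C₁*d^θ ≤ C₁*η^θ := mul_le_mul_of_nonneg_left h3 hC₁nn
        calc (d/η)*|g d - I| ≤ 1*(C₁*η^θ) :=
              mul_le_mul h1 (le_trans hgd h4) (abs_nonneg _) (by norm_num)
          _ = C₁*η^θ := one_mul _
      have heq3 : c*η^θ + (1/2)*(C₃*η^θ) + C₁*η^θ = C₃*η^θ := by
        rw [hC₃def]; ring
      linarith
  have hfinalbd : ∀ η : ℝ, 0 < η → η ≤ 1 → |g η - I| ≤ C₃ * η^θ := by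
    intro η hη hη1
    have hlim : Tendsto (fun N : ℕ => C₃*η^θ + (1/2:ℝ)^N*H) atTop (nhds (C₃*η^θ + 0)) := by
      refine tendsto_const_nhds.add ?_
      have := (tendsto_pow_atTop_nhds_zero_of_lt_one
        (by norm_num : (0:ℝ) ≤ 1/2) (by norm_num : (1/2:ℝ) < 1)).mul_const H
      simpa using this
    have := ge_of_tendsto hlim (Filter.Eventually.of_forall fun N => hmain N η hη hη1)
    simpa using this
  -- conclusion
  refine ⟨I, C₃ + 1, by linarith, ?_, ?_⟩
  · intro ε hε
    rw [hIeps ε hε.1 hε.2]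
    have h1 := hfinalbd ε hε.1 hε.2
    have h2 : 0 ≤ ε^θ := Real.rpow_nonneg hε.1.le _
    calc |g ε - I| ≤ C₃ * ε^θ := h1
      _ ≤ (C₃+1) * ε^θ := by linarith
  · have hev : ∀ᶠ ε in nhdsWithin (0:ℝ) (Ioi 0),
        dist (Ieps x y A f 0 1 ε) I ≤ (C₃+1)*ε^θ := by
      filter_upwards [Ioc_mem_nhdsGT_of_mem
        (⟨le_rfl, by norm_num⟩ : (0:ℝ) ∈ Ico (0:ℝ) 1)] with ε hε
      rw [Real.dist_eq, hIeps ε hε.1 hε.2]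
      have h1 := hfinalbd ε hε.1 hε.2
      have h2 : 0 ≤ ε^θ := Real.rpow_nonneg hε.1.le _
      linarith
    refine tendsto_iff_dist_tendsto_zero.mpr ?_
    apply squeeze_zero' (Filter.Eventually.of_forall fun ε => dist_nonneg) hev
    have h0 : Tendsto (fun ε : ℝ => ε^θ) (nhds 0) (nhds 0) := by
      have := (Real.continuousAt_rpow_const 0 θ (Or.inr hθpos.le)).tendsto
      simpa [Real.zero_rpow hθpos.ne'] using this
    have h1 : Tendsto (fun ε : ℝ => (C₃+1)*ε^θ) (nhds 0) (nhds ((C₃+1)*0)) :=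
      h0.const_mul _
    rw [mul_zero] at h1
    exact h1.mono_left nhdsWithin_le_nhds
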